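/- Let M be a complete DFA over a finite alphabet Σ with finite state set and transition function δ. Then M is polycyclic (for every state p there exists a word u_p with Loop_M(p) ⊆ {u_p}*) if and only if every strongly connected component of M is a single cycle, in the following precise sense: for every state p and all letters a, b ∈ Σ, if δ(p,a) and p are mutually reachable and δ(p,b) and p are mutually reachable, then a = b. -/
import Mathlib


/-- The `n`-fold concatenation power of a word `u`. -/
def wordPow {α : Type*} (u : List α) : ℕ → List α
  | 0 => []
  | n + 1 => u ++ wordPow u n

/-- Two states of a DFA are mutually reachable if each can be reached from the
other by reading some word. -/
def MutuallyReachable {α σ : Type*} (M : DFA α σ) (q q' : σ) : Prop :=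
  (∃ w : List α, M.evalFrom q w = q') ∧ (∃ w : List α, M.evalFrom q' w = q)

lemma wordPow_nil {α : Type*} (k : ℕ) : wordPow ([] : List α) k = [] := by
  induction k with
  | zero => rfl
  | succ n ih => simp [wordPow, ih]

lemma loop_step_mr {α σ : Type*} (M : DFA α σ) (p : σ) (v : List α) (i : ℕ)
    (hi : i < v.length) (hv : M.evalFrom p v = p) :
    MutuallyReachable M (M.step (M.evalFrom p (v.take i)) (v[i]))
      (M.evalFrom p (v.take i)) := by
  set q := M.evalFrom p (v.take i) with hq
  have hsplit : M.evalFrom q (v.drop i) = p := by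
    rw [hq, ← DFA.evalFrom_of_append, List.take_append_drop, hv]
  have hdrop : v.drop i = v[i] :: v.drop (i + 1) := List.drop_eq_getElem_cons hi
  have h1 : M.evalFrom (M.step q v[i]) (v.drop (i + 1)) = p := by
    rw [hdrop] at hsplit; exact hsplit
  constructor
  · exact ⟨v.drop (i + 1) ++ v.take i, by rw [DFA.evalFrom_of_append, h1]⟩
  · exact ⟨[v[i]], rfl⟩

lemma take_eq_of_loops {α σ : Type*} (M : DFA α σ)
    (h : ∀ p : σ, ∀ a b : α, MutuallyReachable M (M.step p a) p →
      MutuallyReachable M (M.step p b) p → a = b)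
    (p : σ) (u w : List α) (hu : M.evalFrom p u = p) (hw : M.evalFrom p w = p) :
    ∀ i, i ≤ u.length → i ≤ w.length → u.take i = w.take i := by
  intro i
  induction i with
  | zero => simp
  | succ n ih =>
    intro hnu hnw
    have hnu' : n < u.length := Nat.lt_of_succ_le hnu
    have hnw' : n < w.length := Nat.lt_of_succ_le hnw
    have hn : u.take n = w.take n := ih hnu'.le hnw'.le
    have h1 := loop_step_mr M p u n hnu' hu
    have h2 := loop_step_mr M p w n hnw' hw
    rw [← hn] at h2
    have heq : u[n] = w[n] := h _ _ _ h1 h2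
    rw [List.take_succ, List.take_succ, hn, List.getElem?_eq_getElem hnu',
      List.getElem?_eq_getElem hnw', heq]

lemma loop_pow {α σ : Type*} (M : DFA α σ)
    (h : ∀ p : σ, ∀ a b : α, MutuallyReachable M (M.step p a) p →
      MutuallyReachable M (M.step p b) p → a = b)
    (p : σ) (u : List α) (hu : M.evalFrom p u = p) (hune : u ≠ [])
    (humin : ∀ v : List α, v ≠ [] → M.evalFrom p v = p → u.length ≤ v.length) :
    ∀ n (w : List α), w.length ≤ n → M.evalFrom p w = p → ∃ k, w = wordPow u k := by
  intro n
  induction n with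
  | zero =>
    intro w hlen hw
    have : w = [] := List.eq_nil_of_length_eq_zero (Nat.le_zero.mp hlen)
    exact ⟨0, by simp [this, wordPow]⟩
  | succ n ih =>
    intro w hlen hw
    by_cases hwe : w = []
    · exact ⟨0, by simp [hwe, wordPow]⟩
    · have hlu : u.length ≤ w.length := humin w hwe hw
      have htake : u.take u.length = w.take u.length :=
        take_eq_of_loops M h p u w hu hw u.length le_rfl hlu
      rw [List.take_length] at htake
      have hsplit : w = u ++ w.drop u.length := by
        conv_lhs => rw [← List.take_append_drop u.length w, ← htake]
      have hdroploop : M.evalFrom p (w.drop u.length) = p := by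
        have := hw
        rw [hsplit, DFA.evalFrom_of_append, hu] at this
        exact this
      have hupos : 0 < u.length := List.length_pos_iff.mpr hune
      have hdlen : (w.drop u.length).length ≤ n := by
        rw [List.length_drop]; omega
      obtain ⟨k, hk⟩ := ih _ hdlen hdroploop
      exact ⟨k + 1, by rw [hsplit, hk]; rfl⟩

/-- A complete DFA with finite state set is polycyclic (every loop
language is contained in the powers of a single word) iff every strongly
connected component is a single cycle: for every state `p` and letters `a, b`,
if both `δ(p,a)` and `δ(p,b)` are mutually reachable with `p`, then `a = b`. -/
theorem stmt_5 {α : Type*} [Fintype α] {σ : Type*} [Fintype σ] (M : DFA α σ) :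
    (∀ p : σ, ∃ u : List α,
        {w : List α | M.evalFrom p w = p} ⊆ {w : List α | ∃ k : ℕ, w = wordPow u k}) ↔
    (∀ p : σ, ∀ a b : α,
        MutuallyReachable M (M.step p a) p → MutuallyReachable M (M.step p b) p → a = b) := by
  constructor
  · intro h p a b ⟨⟨wa, hwa⟩, _⟩ ⟨⟨wb, hwb⟩, _⟩
    obtain ⟨u, hu⟩ := h p
    have hla : M.evalFrom p (a :: wa) = p := hwa
    have hlb : M.evalFrom p (b :: wb) = p := hwb
    obtain ⟨ka, hka⟩ := hu hla
    obtain ⟨kb, hkb⟩ := hu hlb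
    match u with
    | [] => rw [wordPow_nil] at hka; exact absurd hka (by simp)
    | c :: u' =>
      match ka with
      | 0 => exact absurd hka (by simp [wordPow])
      | ka + 1 =>
        match kb with
        | 0 => exact absurd hkb (by simp [wordPow])
        | kb + 1 =>
          simp only [wordPow, List.cons_append] at hka hkb
          rw [List.cons.injEq] at hka hkb
          rw [hka.1, hkb.1]
  · intro h p
    by_cases hex : ∃ v : List α, v ≠ [] ∧ M.evalFrom p v = p
    · classical
      obtain ⟨v, hvne, hv⟩ := hex
      have hP : ∃ n, ∃ v : List α, v.length = n ∧ v ≠ [] ∧ M.evalFrom p v = p :=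
        ⟨v.length, v, rfl, hvne, hv⟩
      obtain ⟨u, hulen, hune, hu⟩ := Nat.find_spec hP
      refine ⟨u, fun w hw => ?_⟩
      have humin : ∀ v' : List α, v' ≠ [] → M.evalFrom p v' = p → u.length ≤ v'.length := by
        intro v' hne' hv'
        rw [hulen]
        exact Nat.find_min' hP ⟨v', rfl, hne', hv'⟩
      exact loop_pow M h p u hu hune humin w.length w le_rfl hw
    · refine ⟨[], fun w hw => ?_⟩
      by_cases hwe : w = []
      · exact ⟨0, by simp [hwe, wordPow]⟩
      · exact absurd ⟨w, hwe, hw⟩ hex
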